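/- arXiv:2502.14674 — 2 statements merged into one kernel-verified Lean document; each statement's English description precedes it below -/
import Mathlib

section
/- Let q be a power of 2, Y an indeterminate, A = Y^8 + Y^4 + Y^3 + Y^2 + Y and B = Y^8 + Y^7 + Y^4 + Y^2 in F_q[Y]. Then the polynomial H(X,Y) = X^{16} + A X^8 + (B+1) X^4 + A X^2 + B X + A is absolutely irreducible over F_q, i.e., irreducible as a polynomial in the algebraic closure of F_q in two variables. -/
set_option maxHeartbeats 1000000
set_option synthInstance.maxHeartbeats 1000000
open Polynomial

namespace Stmt16

variable {K : Type*} [Field K] [CharP K 2]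

noncomputable def pA (K : Type*) [Field K] : Polynomial K := X^8 + X^4 + X^3 + X^2 + X
noncomputable def pB (K : Type*) [Field K] : Polynomial K := X^8 + X^7 + X^4 + X^2

lemma natDegree_pA : (pA K).natDegree = 8 := by unfold pA; compute_degree!
lemma natDegree_pB : (pB K).natDegree = 8 := by unfold pB; compute_degree!

/-- Master nonexistence lemma in K[Y]. -/
lemma master (ε lam : K) (hlam : lam ≠ 0) (r : Polynomial K)
    (h : r^4 + pA K * r^2 + pB K * r + C ε * pA K + C lam * (pB K)^2 = 0) : False := by
  have htwoK : (2 : K) = 0 := CharTwo.two_eq_zero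
  -- step 1 : natDegree r ≤ 4
  have hdeg : r.natDegree ≤ 4 := by
    by_contra hd
    push_neg at hd
    have hr0 : r ≠ 0 := by
      rintro rfl
      simp at hd
    have h4 : r^4 = -(pA K * r^2 + pB K * r + C ε * pA K + C lam * (pB K)^2) := by
      linear_combination h
    have hL : (r^4).natDegree = 4 * r.natDegree := natDegree_pow r 4
    have hR : (-(pA K * r^2 + pB K * r + C ε * pA K + C lam * (pB K)^2)).natDegree
        ≤ 2 * r.natDegree + 8 := by
      rw [natDegree_neg]
      refine (natDegree_add_le _ _).trans ?_
      have h1 : (pA K * r^2).natDegree ≤ 2 * r.natDegree + 8 := by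
        refine (natDegree_mul_le).trans ?_
        rw [natDegree_pA, natDegree_pow]; omega
      have h2 : (pB K * r).natDegree ≤ 2 * r.natDegree + 8 := by
        refine (natDegree_mul_le).trans ?_
        rw [natDegree_pB]; omega
      have h3 : (C ε * pA K).natDegree ≤ 2 * r.natDegree + 8 := by
        refine (natDegree_mul_le).trans ?_
        simp [natDegree_pA]
      have h4' : (C lam * (pB K)^2).natDegree ≤ 2 * r.natDegree + 8 := by
        refine (natDegree_mul_le).trans ?_
        simp [natDegree_pow, natDegree_pB]; omega
      simp only [max_le_iff]
      exact ⟨(natDegree_add_le _ _).trans (by simp [max_le_iff]; exact ⟨(natDegree_add_le _ _).trans (by simp [max_le_iff]; exact ⟨h1, h2⟩), h3⟩), h4'⟩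
    rw [h4] at hL
    omega
  -- step 2: explicit form
  set r4 := r.coeff 4 with hr4d
  set r3 := r.coeff 3 with hr3d
  set r2 := r.coeff 2 with hr2d
  set r1 := r.coeff 1 with hr1d
  set r0 := r.coeff 0 with hr0d
  have hrsum : r = C r4 * X^4 + C r3 * X^3 + C r2 * X^2 + C r1 * X + C r0 := by
    have h5 := r.as_sum_range' 5 (by omega)
    rw [h5]
    simp [Finset.sum_range_succ, ← C_mul_X_pow_eq_monomial]
    ring
  have hsq : r^2 = (C r4)^2*X^8 + (C r3)^2*X^6 + (C r2)^2*X^4 + (C r1)^2*X^2 + (C r0)^2 := by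
    rw [hrsum, CharTwo.add_sq, CharTwo.add_sq, CharTwo.add_sq, CharTwo.add_sq]
    ring
  have hq : r^4 = (C r4)^4*X^16 + (C r3)^4*X^12 + (C r2)^4*X^8 + (C r1)^4*X^4 + (C r0)^4 := by
    have : r^4 = (r^2)^2 := by ring
    rw [this, hsq, CharTwo.add_sq, CharTwo.add_sq, CharTwo.add_sq, CharTwo.add_sq]
    ring
  have hB2 : (pB K)^2 = X^16 + X^14 + X^8 + X^4 := by
    unfold pB
    rw [CharTwo.add_sq, CharTwo.add_sq, CharTwo.add_sq]
    ring
  -- canonical expansion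
  have hbig : C (r4^2 + r4^4 + lam) * X^16 + C (lam + r3^2) * X^14
      + C (r4 + r4^2 + r2^2 + r3^4) * X^12 + C (r4 + r4^2 + r3) * X^11
      + C (r4^2 + r1^2 + r2 + r3 + r3^2) * X^10 + C (r4^2 + r1 + r2 + r3^2) * X^9
      + C (ε + r4 + lam + r0 + r0^2 + r1 + r2^2 + r2^4 + r3^2) * X^8
      + C (r0 + r2^2 + r3 + r3^2) * X^7 + C (r4 + r1^2 + r2 + r2^2) * X^6
      + C (r1 + r1^2 + r2^2 + r3) * X^5 + C (ε + lam + r0 + r0^2 + r1^2 + r1^4 + r2) * X^4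
      + C (ε + r0^2 + r1 + r1^2) * X^3 + C (ε + r0 + r0^2) * X^2 + C (ε + r0^2) * X
      + C (r0^4) = 0 := by
    rw [← h, hq, hsq, hB2]
    conv_rhs => rw [hrsum]
    unfold pA pB
    simp only [map_add, map_mul, map_pow]
    ring
  have hco : ∀ k : ℕ, (C (r4^2 + r4^4 + lam) * X^16 + C (lam + r3^2) * X^14
      + C (r4 + r4^2 + r2^2 + r3^4) * X^12 + C (r4 + r4^2 + r3) * X^11
      + C (r4^2 + r1^2 + r2 + r3 + r3^2) * X^10 + C (r4^2 + r1 + r2 + r3^2) * X^9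
      + C (ε + r4 + lam + r0 + r0^2 + r1 + r2^2 + r2^4 + r3^2) * X^8
      + C (r0 + r2^2 + r3 + r3^2) * X^7 + C (r4 + r1^2 + r2 + r2^2) * X^6
      + C (r1 + r1^2 + r2^2 + r3) * X^5 + C (ε + lam + r0 + r0^2 + r1^2 + r1^4 + r2) * X^4
      + C (ε + r0^2 + r1 + r1^2) * X^3 + C (ε + r0 + r0^2) * X^2 + C (ε + r0^2) * X
      + C (r0^4)).coeff k = 0 := by
    intro k; rw [hbig]; simp
  have he0 := hco 0
  have he1 := hco 1
  have he3 := hco 3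
  have he5 := hco 5
  have he7 := hco 7
  have he14 := hco 14
  simp only [coeff_add, coeff_C_mul, coeff_X_pow, coeff_C, coeff_X] at he0 he1 he3 he5 he7 he14
  norm_num at he0 he1 he3 he5 he7 he14
  -- he0 : r0^4 = 0, etc.
  have hr0 : r0 = 0 := he0
  have hε : ε = 0 := by linear_combination he1 - r0 * hr0
  have h13 : r1 + r1^2 = 0 := by linear_combination he3 - hε - r0*hr0
  have h23 : r2^2 + r3 = 0 := by linear_combination he5 - h13
  have hr3sq : r3^2 = 0 := by linear_combination he7 - h23 - hr0
  have hr3 : r3 = 0 := by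
    exact pow_eq_zero_iff (n := 2) (by norm_num) |>.mp hr3sq
  exact hlam (by linear_combination he14 - r3 * hr3)



abbrev FF (K : Type*) [Field K] : Type _ := FractionRing (Polynomial K)

noncomputable def AF (K : Type*) [Field K] : FF K := algebraMap (Polynomial K) (FF K) (pA K)
noncomputable def BF (K : Type*) [Field K] : FF K := algebraMap (Polynomial K) (FF K) (pB K)

noncomputable def gR (K : Type*) [Field K] : Polynomial (Polynomial K) :=
  X^4 + C (pA K) * X^2 + C (pB K) * X + C (pA K)

noncomputable def gF (K : Type*) [Field K] : Polynomial (FF K) :=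
  X^4 + C (AF K) * X^2 + C (BF K) * X + C (AF K)

instance charP_FF : CharP (FF K) 2 :=
  charP_of_injective_algebraMap (IsFractionRing.injective (Polynomial K) (FF K)) 2

omit [CharP K 2] in
lemma monic_gR : (gR K).Monic := by unfold gR; monicity!

omit [CharP K 2] in
lemma monic_gF : (gF K).Monic := by unfold gF; monicity!

omit [CharP K 2] in
lemma degree_gF : (gF K).degree = 4 := by unfold gF; compute_degree!

omit [CharP K 2] in
lemma map_gR : (gR K).map (algebraMap (Polynomial K) (FF K)) = gF K := by
  unfold gR gF
  simp [Polynomial.map_add, Polynomial.map_mul, Polynomial.map_pow, map_C, AF, BF]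

omit [CharP K 2] in
lemma pB_ne_zero : pB K ≠ 0 := by
  intro h
  have : (pB K).natDegree = 8 := by unfold pB; compute_degree!
  rw [h] at this
  simp at this

omit [CharP K 2] in
lemma BF_ne_zero : BF K ≠ 0 := by
  unfold BF
  intro h
  exact pB_ne_zero (K := K) ((map_eq_zero_iff _ (IsFractionRing.injective (Polynomial K) (FF K))).mp h)

omit [CharP K 2] in
/-- gR is Eisenstein at the prime (Y). -/
lemma irreducible_gR : Irreducible (gR K) := by
  apply irreducible_of_eisenstein_criterion (P := Ideal.span {(X : Polynomial K)})
  · exact (Ideal.span_singleton_prime X_ne_zero).mpr prime_X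
  · rw [(monic_gR (K := K)).leadingCoeff]
    rw [Ideal.mem_span_singleton]
    intro hdvd
    exact Polynomial.not_isUnit_X (isUnit_of_dvd_one hdvd)
  · intro n hn
    have hdeg : (gR K).degree = 4 := by unfold gR; compute_degree!
    rw [hdeg] at hn
    have hn' : n < 4 := by exact_mod_cast hn
    rw [Ideal.mem_span_singleton]
    have hdA : (X : Polynomial K) ∣ pA K := ⟨X^7+X^3+X^2+X+1, by unfold pA; ring⟩
    have hdB : (X : Polynomial K) ∣ pB K := ⟨X^7+X^6+X^3+X, by unfold pB; ring⟩
    unfold gR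
    interval_cases n
    · simpa [coeff_X_pow, coeff_C] using hdA
    · simpa [coeff_X_pow, coeff_C] using hdB
    · simpa [coeff_X_pow, coeff_C] using hdA
    · simp [coeff_X_pow, coeff_C]
  · rw [show (gR K).degree = 4 from by unfold gR; compute_degree!]; norm_num
  · rw [Ideal.span_singleton_pow, Ideal.mem_span_singleton]
    intro hdvd
    have hc : (gR K).coeff 0 = pA K := by unfold gR; simp [coeff_C, coeff_X_pow]
    rw [hc] at hdvd
    obtain ⟨t, ht⟩ := hdvd
    have : (pA K).coeff 1 = 0 := by
      rw [ht, mul_comm, coeff_mul_X_pow']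
      norm_num
    unfold pA at this
    simp [coeff_X_pow, coeff_X] at this
  · exact (monic_gR (K := K)).isPrimitive

omit [CharP K 2] in
lemma irreducible_gF : Irreducible (gF K) := by
  rw [← map_gR]
  exact ((monic_gR (K := K)).irreducible_iff_irreducible_map_fraction_map).mp irreducible_gR

instance factIrr_gF : Fact (Irreducible (gF K)) := ⟨irreducible_gF⟩

lemma cubic_coeffs_eq_zero {S : Type*} [Field S] {a3 a2 a1 a0 : S}
    (h : C a3 * X^3 + C a2*X^2 + C a1*X + C a0 = 0) :
    a3 = 0 ∧ a2 = 0 ∧ a1 = 0 ∧ a0 = 0 := by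
  refine ⟨?_, ?_, ?_, ?_⟩
  · have := congrArg (fun q => coeff q 3) h
    simp only [coeff_add, coeff_C_mul, coeff_X_pow, coeff_C, coeff_X, coeff_zero] at this
    norm_num at this
    exact this
  · have := congrArg (fun q => coeff q 2) h
    simp only [coeff_add, coeff_C_mul, coeff_X_pow, coeff_C, coeff_X, coeff_zero] at this
    norm_num at this
    exact this
  · have := congrArg (fun q => coeff q 1) h
    simp only [coeff_add, coeff_C_mul, coeff_X_pow, coeff_C, coeff_X, coeff_zero] at this
    norm_num at this
    exact this
  · have := congrArg (fun q => coeff q 0) h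
    simp only [coeff_add, coeff_C_mul, coeff_X_pow, coeff_C, coeff_X, coeff_zero] at this
    norm_num at this
    exact this

lemma master_F (ε lam : K) (hlam : lam ≠ 0) (e : FF K)
    (h : e^4 + AF K * e^2 + BF K * e + algebraMap (Polynomial K) (FF K) (C ε) * AF K
      + algebraMap (Polynomial K) (FF K) (C lam) * (BF K)^2 = 0) : False := by
  rw [show AF K = algebraMap (Polynomial K) (FF K) (pA K) from rfl,
      show BF K = algebraMap (Polynomial K) (FF K) (pB K) from rfl] at h
  have hint : IsIntegral (Polynomial K) e := by
    refine ⟨X^4 + C (pA K) * X^2 + C (pB K) * X + C (C ε * pA K + C lam * (pB K)^2), ?_, ?_⟩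
    · monicity!
    · simp only [eval₂_add, eval₂_mul, eval₂_pow, eval₂_X, eval₂_C, map_add, map_mul, map_pow]
      linear_combination h
  obtain ⟨r, hr⟩ := IsIntegrallyClosed.isIntegral_iff.mp hint
  refine master ε lam hlam r ?_
  apply IsFractionRing.injective (Polynomial K) (FF K)
  rw [map_zero]
  simp only [map_add, map_mul, map_pow, hr]
  linear_combination h

lemma as_step (μ : K) (hμ : μ^3 = 1) (w : AdjoinRoot (gF K)) :
    w^2 + w ≠ AdjoinRoot.of (gF K) (algebraMap (Polynomial K) (FF K) (C μ)) * AdjoinRoot.root (gF K) := by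
  have htwoF : (2 : FF K) = 0 := CharTwo.two_eq_zero
  intro hw
  obtain ⟨p0, rfl⟩ := AdjoinRoot.mk_surjective w
  have hqm : (gF K).Monic := monic_gF
  set μ' := algebraMap (Polynomial K) (FF K) (C μ) with hμ'def
  set A' := AF K with hA'def
  set B' := BF K with hB'def
  set p := p0 %ₘ gF K with hpdef
  have hwp : AdjoinRoot.mk (gF K) p = AdjoinRoot.mk (gF K) p0 := by
    rw [AdjoinRoot.mk_eq_mk]
    exact ⟨-(p0 /ₘ gF K), by have h5 := modByMonic_add_div p0 (gF K); linear_combination h5⟩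
  have hdvd : gF K ∣ p^2 + p - C μ' * X := by
    rw [← AdjoinRoot.mk_eq_zero, RingHom.map_sub, RingHom.map_add, RingHom.map_pow,
      RingHom.map_mul, hwp, hw,
      show AdjoinRoot.mk (gF K) (C μ') = AdjoinRoot.of (gF K) μ' from rfl, AdjoinRoot.mk_X]
    ring
  have hdp : p.degree < (4 : ℕ) := by
    have := degree_modByMonic_lt p0 hqm
    rwa [degree_gF] at this
  have hnd : p.natDegree < 4 := by
    rcases eq_or_ne p 0 with h0 | h0
    · simp [h0]
    · exact (natDegree_lt_iff_degree_lt h0).mpr (by exact_mod_cast hdp)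
  set c3 := p.coeff 3 with hc3def
  set c2 := p.coeff 2 with hc2def
  set c1 := p.coeff 1 with hc1def
  set c0 := p.coeff 0 with hc0def
  have hp3 : p = C c3*X^3 + C c2*X^2 + C c1*X + C c0 := by
    have h4 := p.as_sum_range' 4 hnd
    rw [h4]
    simp [Finset.sum_range_succ, ← C_mul_X_pow_eq_monomial]
    ring
  have hsqp : p^2 = (C c3)^2*X^6 + (C c2)^2*X^4 + (C c1)^2*X^2 + (C c0)^2 := by
    rw [hp3, CharTwo.add_sq, CharTwo.add_sq, CharTwo.add_sq]
    ring
  have hD : p^2 + p - C μ' * X - gF K * (C (c3^2) * X^2 + C (c2^2 - A'*c3^2))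
      = C (c3 - B'*c3^2) * X^3 + C (c1^2 + c2 - A'*(c2^2 - A'*c3^2) - A'*c3^2) * X^2
        + C (c1 - μ' - B'*(c2^2 - A'*c3^2)) * X + C (c0^2 + c0 - A'*(c2^2 - A'*c3^2)) := by
    rw [hsqp]
    conv_lhs => rw [hp3]
    rw [show gF K = X^4 + C A' * X^2 + C B' * X + C A' from rfl]
    simp only [map_sub, map_add, map_mul, map_pow]
    ring
  have hDdvd : gF K ∣ C (c3 - B'*c3^2) * X^3 + C (c1^2 + c2 - A'*(c2^2 - A'*c3^2) - A'*c3^2) * X^2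
        + C (c1 - μ' - B'*(c2^2 - A'*c3^2)) * X + C (c0^2 + c0 - A'*(c2^2 - A'*c3^2)) := by
    rw [← hD]
    exact dvd_sub hdvd (Dvd.intro _ rfl)
  have hD0 : C (c3 - B'*c3^2) * X^3 + C (c1^2 + c2 - A'*(c2^2 - A'*c3^2) - A'*c3^2) * X^2
        + C (c1 - μ' - B'*(c2^2 - A'*c3^2)) * X + C (c0^2 + c0 - A'*(c2^2 - A'*c3^2)) = 0 := by
    by_contra hne
    have hle := degree_le_of_dvd hDdvd hne
    have hle3 : (C (c3 - B'*c3^2) * X^3 + C (c1^2 + c2 - A'*(c2^2 - A'*c3^2) - A'*c3^2) * X^2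
        + C (c1 - μ' - B'*(c2^2 - A'*c3^2)) * X + C (c0^2 + c0 - A'*(c2^2 - A'*c3^2))).degree ≤ 3 := by
      compute_degree
    rw [degree_gF] at hle
    have := hle.trans hle3
    norm_num at this
  obtain ⟨heq3, heq2, heq1, -⟩ := cubic_coeffs_eq_zero hD0
  have hμ0 : μ ≠ 0 := by rintro rfl; simp at hμ
  have hμ2 : μ^2 ≠ 0 := pow_ne_zero _ hμ0
  have hc1v : c1 = μ' + B'*c2^2 - A'*B'*c3^2 := by linear_combination heq1
  have hsq1 : c1^2 = μ'^2 + B'^2*c2^4 + A'^2*B'^2*c3^4 := by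
    rw [hc1v, CharTwo.sub_eq_add, CharTwo.add_sq, CharTwo.add_sq]
    ring
  rcases mul_eq_zero.mp (show c3 * (1 - B'*c3) = 0 by linear_combination heq3) with hz | hb
  · -- c3 = 0 case
    refine master_F 0 (μ^2) hμ2 (B'*c2) ?_
    simp only [map_zero, zero_mul, add_zero, map_pow]
    rw [← hμ'def]
    linear_combination B'^2*heq2 - B'^2*hsq1
      + (A'*B'^2*c3 - A'^2*B'^2*c3 - A'^2*B'^4*c3^3)*hz + A'*B'^2*c2^2*htwoF
  · -- B'*c3 = 1 case
    have hbe : B'*c3 = 1 := by linear_combination -hb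
    have hb2 : B'^2*c3^2 = 1 := by linear_combination (B'*c3 + 1) * hbe
    have hb4 : B'^4*c3^4 = 1 := by linear_combination (B'^2*c3^2 + 1) * hb2
    refine master_F 1 (μ^2) hμ2 (B'*c2) ?_
    simp only [map_one, one_mul, map_pow]
    rw [← hμ'def]
    linear_combination B'^2*heq2 - B'^2*hsq1 + (A' - A'^2)*hb2 - A'^2*hb4
      + (A'*B'^2*c2^2 + A' - A'^2)*htwoF


lemma as_comp {k : Type*} [Field k] [CharP k 2] (f : Polynomial k) (hm : f.Monic)
    (hirr : Irreducible f)
    (has : ∀ w : AdjoinRoot f, w^2 + w ≠ AdjoinRoot.root f) :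
    Irreducible (f.comp (X^2 + X)) := by
  haveI := Fact.mk hirr
  haveI : CharP (AdjoinRoot f) 2 :=
    charP_of_injective_algebraMap (algebraMap k (AdjoinRoot f)).injective 2
  set θ := AdjoinRoot.root f with hθ
  set q2 : Polynomial (AdjoinRoot f) := X^2 + X + C θ with hq2def
  have hq2m : q2.Monic := by rw [hq2def]; monicity!
  have hq2d : q2.natDegree = 2 := by rw [hq2def]; compute_degree!
  have hq2irr : Irreducible q2 := by
    by_contra hni
    obtain ⟨u, v, huv, hsum⟩ := (hq2m.not_irreducible_iff_exists_add_mul_eq_coeff hq2d).mp hni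
    have hc0 : q2.coeff 0 = θ := by rw [hq2def]; simp [coeff_X_pow]
    have hc1 : q2.coeff 1 = 1 := by rw [hq2def]; simp [coeff_X_pow]
    rw [hc0] at huv
    rw [hc1] at hsum
    refine has u ?_
    have h2 : (2 : AdjoinRoot f) = 0 := CharTwo.two_eq_zero
    linear_combination (-1 : AdjoinRoot f)*huv + u*hsum + u^2*h2
  haveI := Fact.mk hq2irr
  haveI : CharP (AdjoinRoot q2) 2 :=
    charP_of_injective_algebraMap (algebraMap (AdjoinRoot f) (AdjoinRoot q2)).injective 2
  set x := AdjoinRoot.root q2 with hx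
  have hxx : x^2 + x = algebraMap (AdjoinRoot f) (AdjoinRoot q2) θ := by
    have h0 : eval₂ (AdjoinRoot.of q2) x (X^2 + X + C θ) = 0 := by
      rw [← hq2def]; exact AdjoinRoot.eval₂_root q2
    simp only [eval₂_add, eval₂_pow, eval₂_X, eval₂_C] at h0
    have h2 : (2 : AdjoinRoot q2) = 0 := CharTwo.two_eq_zero
    rw [AdjoinRoot.algebraMap_eq]
    linear_combination h0 - (AdjoinRoot.of q2 θ) * h2
  have haevalθ : aeval θ f = 0 := by
    rw [AdjoinRoot.aeval_eq, AdjoinRoot.mk_self]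
  have hcomp0 : aeval x (f.comp (X^2+X)) = 0 := by
    rw [aeval_comp]
    have h1 : aeval x ((X^2+X : Polynomial k)) = x^2+x := by simp
    rw [h1, hxx, ← IsScalarTower.coe_toAlgHom' k (AdjoinRoot f) (AdjoinRoot q2),
      aeval_algHom_apply, haevalθ, map_zero]
  have hX2Xm : (X^2 + X : Polynomial k).Monic := by monicity!
  have hX2Xd : (X^2 + X : Polynomial k).natDegree = 2 := by compute_degree!
  have hmc : (f.comp (X^2+X)).Monic := by
    rw [Monic, leadingCoeff_comp (by rw [hX2Xd]; norm_num)]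
    rw [hm.leadingCoeff, hX2Xm.leadingCoeff]
    simp
  have hint : IsIntegral k x := ⟨f.comp (X^2+X), hmc, hcomp0⟩
  have hmem : x^2 + x ∈ Algebra.adjoin k {x} := by
    refine Subalgebra.add_mem _ (Subalgebra.pow_mem _ ?_ 2) ?_ <;>
      exact Algebra.self_mem_adjoin_singleton k x
  have hle : Algebra.adjoin k {x^2 + x} ≤ Algebra.adjoin k {x} :=
    Algebra.adjoin_le (by simpa using hmem)
  have hall : ∀ gy : Polynomial (AdjoinRoot f),
      aeval x gy ∈ Algebra.adjoin k {x} := by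
    intro gy
    induction gy using Polynomial.induction_on' with
    | add p q hp hq => rw [map_add]; exact Subalgebra.add_mem _ hp hq
    | monomial n a =>
      rw [aeval_monomial]
      apply Subalgebra.mul_mem
      · obtain ⟨pa, rfl⟩ := AdjoinRoot.mk_surjective a
        have e1 : aeval ((algebraMap (AdjoinRoot f) (AdjoinRoot q2)) θ) pa
            = (algebraMap (AdjoinRoot f) (AdjoinRoot q2)) (aeval θ pa) := by
          have h3 := aeval_algHom_apply
            (IsScalarTower.toAlgHom k (AdjoinRoot f) (AdjoinRoot q2)) θ pa
          simpa [IsScalarTower.coe_toAlgHom'] using h3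
        rw [← AdjoinRoot.aeval_eq, ← e1, ← hxx]
        exact hle (aeval_mem_adjoin_singleton _ _)
      · exact Subalgebra.pow_mem _ (Algebra.self_mem_adjoin_singleton k x) n
  have htop : Algebra.adjoin k {x} = ⊤ := by
    rw [eq_top_iff]
    intro y _
    obtain ⟨gy, rfl⟩ := AdjoinRoot.mk_surjective y
    rw [← AdjoinRoot.aeval_eq]
    exact hall gy
  -- dimension count
  have hfne : f ≠ 0 := hirr.ne_zero
  have hq2ne : q2 ≠ 0 := hq2irr.ne_zero
  haveI : Module.Finite k (AdjoinRoot f) := Module.Finite.of_basis (AdjoinRoot.powerBasis hfne).basis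
  haveI : Module.Finite (AdjoinRoot f) (AdjoinRoot q2) :=
    Module.Finite.of_basis (AdjoinRoot.powerBasis hq2ne).basis
  have hfr1 : Module.finrank k (AdjoinRoot f) = f.natDegree :=
    (AdjoinRoot.powerBasis hfne).finrank
  have hfr2 : Module.finrank (AdjoinRoot f) (AdjoinRoot q2) = 2 := by
    rw [(AdjoinRoot.powerBasis hq2ne).finrank]
    exact hq2d
  have hfrM : Module.finrank k (AdjoinRoot q2) = f.natDegree * 2 := by
    rw [← Module.finrank_mul_finrank k (AdjoinRoot f) (AdjoinRoot q2), hfr1, hfr2]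
  have hmindeg : (minpoly k x).natDegree = f.natDegree * 2 := by
    have hadj := IntermediateField.adjoin.finrank hint
    have htop' : IntermediateField.adjoin k {x} = ⊤ :=
      IntermediateField.adjoin_eq_top_of_algebra (F := k) (E := AdjoinRoot q2) (S := {x}) htop
    rw [htop', IntermediateField.finrank_top'] at hadj
    rw [← hadj, hfrM]
  have hcompdeg : (f.comp (X^2+X)).natDegree = f.natDegree * 2 := by
    rw [natDegree_comp, hX2Xd]
  obtain ⟨c, hc⟩ := minpoly.dvd k x hcomp0
  have hmpm : (minpoly k x).Monic := minpoly.monic hint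
  have hcne : c ≠ 0 := by
    rintro rfl
    rw [mul_zero] at hc
    exact hmc.ne_zero hc
  have hcm : c.Monic := by
    have := hmc
    rw [hc, Monic, leadingCoeff_mul, hmpm.leadingCoeff, one_mul] at this
    exact this
  have hcd : c.natDegree = 0 := by
    have hdegs := congrArg natDegree hc
    rw [hcompdeg, natDegree_mul (hmpm.ne_zero) hcne, hmindeg] at hdegs
    omega
  have hc1 : c = 1 := hcm.natDegree_eq_zero.mp hcd
  rw [hc, hc1, mul_one]
  exact minpoly.irreducible hint


lemma linear_coeffs_eq_zero {S : Type*} [Field S] {a1 a0 : S}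
    (h : C a1 * X + C a0 = 0) : a1 = 0 ∧ a0 = 0 := by
  constructor
  · have := congrArg (fun q => coeff q 1) h
    simp only [coeff_add, coeff_C_mul, coeff_C, coeff_X, coeff_zero] at this
    norm_num at this
    exact this
  · have := congrArg (fun q => coeff q 0) h
    simp only [coeff_add, coeff_C_mul, coeff_C, coeff_X, coeff_zero] at this
    norm_num at this
    exact this

noncomputable def q1 (K : Type*) [Field K] : Polynomial (AdjoinRoot (gF K)) :=
  X^2 + X + C (AdjoinRoot.root (gF K))

instance charP_L1 : CharP (AdjoinRoot (gF K)) 2 :=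
  charP_of_injective_algebraMap (algebraMap (FF K) (AdjoinRoot (gF K))).injective 2

lemma step_c [IsAlgClosed K] (v : AdjoinRoot (q1 K)) :
    v^2 + v ≠ AdjoinRoot.root (q1 K) := by
  obtain ⟨ω, hωr⟩ := IsAlgClosed.exists_root (X^2+X+1 : Polynomial K)
    (by rw [show ((X^2+X+1 : Polynomial K)).degree = 2 by compute_degree!]; norm_num)
  have hω : ω^2 + ω + 1 = 0 := by simpa [IsRoot, eval_add, eval_pow] using hωr
  have hω3 : ω^3 = 1 := by linear_combination (ω - 1) * hω
  intro hv
  obtain ⟨r0, rfl⟩ := AdjoinRoot.mk_surjective v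
  have hq1m : (q1 K).Monic := by unfold q1; monicity!
  have hq1deg : (q1 K).degree = 2 := by unfold q1; compute_degree!
  set z := AdjoinRoot.root (gF K) with hzdef
  set r := r0 %ₘ q1 K with hrdef
  have hwp : AdjoinRoot.mk (q1 K) r = AdjoinRoot.mk (q1 K) r0 :=
    AdjoinRoot.mk_eq_mk.mpr ⟨-(r0 /ₘ q1 K), by linear_combination modByMonic_add_div r0 (q1 K)⟩
  have hdvd : q1 K ∣ r^2 + r - X := by
    rw [← AdjoinRoot.mk_eq_zero, RingHom.map_sub, RingHom.map_add, RingHom.map_pow,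
      AdjoinRoot.mk_X, hwp, hv]
    ring
  have hdeg2 : r.degree < 2 := by
    have := degree_modByMonic_lt r0 hq1m
    rwa [hq1deg] at this
  have hnd1 : r.natDegree ≤ 1 := by
    rcases eq_or_ne r 0 with h0 | h0
    · simp [h0]
    · have h2' : r.natDegree < 2 := by
        rw [natDegree_lt_iff_degree_lt h0]
        exact_mod_cast hdeg2
      omega
  set b := r.coeff 1 with hbdef
  set a := r.coeff 0 with hadef
  have hrba : r = C b * X + C a := eq_X_add_C_of_natDegree_le_one hnd1
  have hsq : r^2 = (C b)^2*X^2 + (C a)^2 := by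
    rw [hrba, CharTwo.add_sq]
    ring
  have hD : r^2 + r - X - q1 K * C (b^2)
      = C (b - 1 - b^2) * X + C (a^2 + a - z*b^2) := by
    rw [hsq]
    conv_lhs => rw [hrba]
    rw [show q1 K = X^2 + X + C z from rfl]
    simp only [map_sub, map_add, map_mul, map_pow, map_one]
    ring
  have hDdvd : q1 K ∣ C (b - 1 - b^2) * X + C (a^2 + a - z*b^2) := by
    rw [← hD]
    exact dvd_sub hdvd ⟨_, rfl⟩
  have hD0 : C (b - 1 - b^2) * X + C (a^2 + a - z*b^2) = 0 := by
    by_contra hne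
    have hle := degree_le_of_dvd hDdvd hne
    have hle1 : (C (b - 1 - b^2) * X + C (a^2 + a - z*b^2)).degree ≤ 1 := by
      compute_degree
    rw [hq1deg] at hle
    have := hle.trans hle1
    norm_num at this
  obtain ⟨hb, ha⟩ := linear_coeffs_eq_zero hD0
  have h2L : (2 : AdjoinRoot (gF K)) = 0 := CharTwo.two_eq_zero
  set ιh : K →+* AdjoinRoot (gF K) :=
    (AdjoinRoot.of (gF K)).comp ((algebraMap (Polynomial K) (FF K)).comp Polynomial.C) with hιh
  have e1 : (ιh ω)^2 + ιh ω + 1 = 0 := by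
    have : ιh (ω^2 + ω + 1) = 0 := by rw [hω]; exact map_zero _
    simpa only [map_add, map_pow, map_one] using this
  have hfac : (b - ιh ω) * (b - (ιh ω)^2) = 0 := by
    linear_combination (-b) * e1 + (ιh ω - 1)*e1 + hb + (b^2+1)*h2L
  rcases mul_eq_zero.mp hfac with hbe | hbe
  · have hbeq : b = ιh ω := by linear_combination hbe
    have hμ3 : (ω^2)^3 = 1 := by rw [show ((ω^2)^3 : K) = (ω^3)^2 by ring, hω3, one_pow]
    refine as_step (ω^2) hμ3 a ?_
    have hb2 : b^2 = AdjoinRoot.of (gF K) (algebraMap (Polynomial K) (FF K) (C (ω^2))) := by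
      rw [hbeq, hιh]
      simp only [RingHom.comp_apply, ← map_pow, ← C_pow]
    rw [← hzdef]
    linear_combination ha + z * hb2
  · have hbeq : b = (ιh ω)^2 := by linear_combination hbe
    have hωω : (ω^2)^2 = ω := by rw [show ((ω^2)^2 : K) = ω * ω^3 by ring, hω3, mul_one]
    refine as_step ω hω3 a ?_
    have hb2 : b^2 = AdjoinRoot.of (gF K) (algebraMap (Polynomial K) (FF K) (C ω)) := by
      rw [hbeq]
      have h4 : ((ιh ω)^2)^2 = ιh ((ω^2)^2) := by simp only [map_pow]
      rw [h4, hωω, hιh]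
      simp only [RingHom.comp_apply]
    rw [← hzdef]
    linear_combination ha + z * hb2


lemma monic_comp_X2X {k : Type*} [Field k] {p : Polynomial k} (hp : p.Monic) :
    (p.comp (X^2+X)).Monic := by
  have hX2Xm : (X^2 + X : Polynomial k).Monic := by monicity!
  have hX2Xd : (X^2 + X : Polynomial k).natDegree = 2 := by compute_degree!
  rw [Monic, leadingCoeff_comp (by rw [hX2Xd]; norm_num), hp.leadingCoeff, hX2Xm.leadingCoeff]
  simp

lemma has1 (w : AdjoinRoot (gF K)) : w^2 + w ≠ AdjoinRoot.root (gF K) := by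
  intro hw
  refine as_step (1 : K) (one_pow 3) w ?_
  rw [map_one, map_one, map_one, one_mul]
  exact hw

lemma irr2 : Irreducible ((gF K).comp (X^2+X)) :=
  as_comp (gF K) monic_gF irreducible_gF has1

lemma has2 [IsAlgClosed K] (w : AdjoinRoot ((gF K).comp (X^2+X))) :
    w^2 + w ≠ AdjoinRoot.root ((gF K).comp (X^2+X)) := by
  intro hw
  have h2L2 : (2 : AdjoinRoot (q1 K)) = 0 := by
    have : ((2:ℕ) : AdjoinRoot (q1 K)) = 0 := by
      rw [← map_natCast (algebraMap (AdjoinRoot (gF K)) (AdjoinRoot (q1 K))) 2]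
      rw [show ((2:ℕ) : AdjoinRoot (gF K)) = 0 from by exact_mod_cast CharTwo.two_eq_zero]
      exact map_zero _
    exact_mod_cast this
  set φ2 : FF K →+* AdjoinRoot (q1 K) :=
    (algebraMap (AdjoinRoot (gF K)) (AdjoinRoot (q1 K))).comp
      (algebraMap (FF K) (AdjoinRoot (gF K))) with hφ2
  have hz1 : (AdjoinRoot.root (q1 K))^2 + AdjoinRoot.root (q1 K)
      = algebraMap (AdjoinRoot (gF K)) (AdjoinRoot (q1 K)) (AdjoinRoot.root (gF K)) := by
    have h0 : eval₂ (AdjoinRoot.of (q1 K)) (AdjoinRoot.root (q1 K))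
        (X^2 + X + C (AdjoinRoot.root (gF K))) = 0 := by
      rw [show (X^2 + X + C (AdjoinRoot.root (gF K)) : Polynomial (AdjoinRoot (gF K))) = q1 K
        from rfl]
      exact AdjoinRoot.eval₂_root (q1 K)
    simp only [eval₂_add, eval₂_pow, eval₂_X, eval₂_C] at h0
    rw [AdjoinRoot.algebraMap_eq]
    linear_combination h0 - (AdjoinRoot.of (q1 K) (AdjoinRoot.root (gF K))) * h2L2
  have hroot0 : eval₂ φ2 (AdjoinRoot.root (q1 K)) ((gF K).comp (X^2+X)) = 0 := by
    rw [eval₂_comp]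
    have h1 : eval₂ φ2 (AdjoinRoot.root (q1 K)) (X^2+X : Polynomial (FF K))
        = (AdjoinRoot.root (q1 K))^2 + AdjoinRoot.root (q1 K) := by
      simp only [eval₂_add, eval₂_pow, eval₂_X]
    rw [h1, hz1, hφ2]
    have h2 := hom_eval₂ (gF K) (algebraMap (FF K) (AdjoinRoot (gF K)))
      (algebraMap (AdjoinRoot (gF K)) (AdjoinRoot (q1 K))) (AdjoinRoot.root (gF K))
    rw [← h2]
    rw [show eval₂ (algebraMap (FF K) (AdjoinRoot (gF K))) (AdjoinRoot.root (gF K)) (gF K) = 0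
      from by rw [AdjoinRoot.algebraMap_eq]; exact AdjoinRoot.eval₂_root (gF K)]
    exact map_zero _
  set ψ := AdjoinRoot.lift φ2 (AdjoinRoot.root (q1 K)) hroot0 with hψ
  refine step_c (ψ w) ?_
  rw [← map_pow, ← map_add, hw, hψ, AdjoinRoot.lift_root]

theorem final (K : Type*) [Field K] [IsAlgClosed K] [CharP K 2] :
    Irreducible
      ((X : Polynomial (Polynomial K)) ^ 16
        + C (X ^ 8 + X ^ 4 + X ^ 3 + X ^ 2 + X : Polynomial K) * X ^ 8
        + C ((X ^ 8 + X ^ 7 + X ^ 4 + X ^ 2 : Polynomial K) + 1) * X ^ 4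
        + C (X ^ 8 + X ^ 4 + X ^ 3 + X ^ 2 + X : Polynomial K) * X ^ 2
        + C (X ^ 8 + X ^ 7 + X ^ 4 + X ^ 2 : Polynomial K) * X
        + C (X ^ 8 + X ^ 4 + X ^ 3 + X ^ 2 + X : Polynomial K)) := by
  have h2R : (2 : Polynomial (Polynomial K)) = 0 := CharTwo.two_eq_zero
  have hH : ((X : Polynomial (Polynomial K)) ^ 16
        + C (X ^ 8 + X ^ 4 + X ^ 3 + X ^ 2 + X : Polynomial K) * X ^ 8
        + C ((X ^ 8 + X ^ 7 + X ^ 4 + X ^ 2 : Polynomial K) + 1) * X ^ 4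
        + C (X ^ 8 + X ^ 4 + X ^ 3 + X ^ 2 + X : Polynomial K) * X ^ 2
        + C (X ^ 8 + X ^ 7 + X ^ 4 + X ^ 2 : Polynomial K) * X
        + C (X ^ 8 + X ^ 4 + X ^ 3 + X ^ 2 + X : Polynomial K))
      = (gR K).comp (X^4 + X) := by
    show (X : Polynomial (Polynomial K))^16 + C (pA K) * X^8 + C (pB K + 1) * X^4
        + C (pA K) * X^2 + C (pB K) * X + C (pA K) = (gR K).comp (X^4+X)
    rw [show gR K = X^4 + C (pA K)*X^2 + C (pB K)*X + C (pA K) from rfl]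
    simp only [add_comp, mul_comp, pow_comp, X_comp, C_comp]
    have h1 : ((X^4 + X : Polynomial (Polynomial K)))^2 = X^8 + X^2 := by
      rw [CharTwo.add_sq]; ring
    have h2 : ((X^4 + X : Polynomial (Polynomial K)))^4 = X^16 + X^4 := by
      rw [show ((X^4+X : Polynomial (Polynomial K)))^4 = ((X^4+X)^2)^2 by ring, h1,
        CharTwo.add_sq]
      ring
    rw [h1, h2, map_add, C_1]
    ring
  rw [hH]
  have hmonic : ((gR K).comp (X^4+X)).Monic := by
    have hXm : (X^4 + X : Polynomial (Polynomial K)).Monic := by monicity!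
    have hXd : (X^4 + X : Polynomial (Polynomial K)).natDegree = 4 := by compute_degree!
    rw [Monic, leadingCoeff_comp (by rw [hXd]; norm_num), (monic_gR (K := K)).leadingCoeff,
      hXm.leadingCoeff]
    simp
  rw [hmonic.irreducible_iff_irreducible_map_fraction_map (K := FF K)]
  have hmap2 : ((gR K).comp (X^4+X)).map (algebraMap (Polynomial K) (FF K))
      = (gF K).comp (X^4+X) := by
    rw [map_comp, map_gR]
    simp only [Polynomial.map_add, Polynomial.map_pow, map_X]
  rw [hmap2]
  have h2F : (2 : Polynomial (FF K)) = 0 := CharTwo.two_eq_zero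
  have hassoc : (gF K).comp (X^4+X) = ((gF K).comp (X^2+X)).comp (X^2+X) := by
    rw [comp_assoc]
    congr 1
    simp only [add_comp, pow_comp, X_comp]
    rw [CharTwo.add_sq]
    linear_combination (-X^2 : Polynomial (FF K)) * h2F
  rw [hassoc]
  exact as_comp _ (monic_comp_X2X monic_gF) irr2 has2

end Stmt16

open Polynomial in
/-- With `A = Y^8+Y^4+Y^3+Y^2+Y` and `B = Y^8+Y^7+Y^4+Y^2`, the polynomial
`H(X,Y) = X^16 + A X^8 + (B+1) X^4 + A X^2 + B X + A` is absolutely irreducible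
over a field of characteristic 2, i.e. irreducible over the algebraic closure
(here: over any algebraically closed field `K` of characteristic 2, viewing
`H ∈ K[Y][X]`). -/
theorem stmt_16 (K : Type*) [Field K] [IsAlgClosed K] [CharP K 2] :
    Irreducible
      ((X : Polynomial (Polynomial K)) ^ 16
        + C (X ^ 8 + X ^ 4 + X ^ 3 + X ^ 2 + X : Polynomial K) * X ^ 8
        + C ((X ^ 8 + X ^ 7 + X ^ 4 + X ^ 2 : Polynomial K) + 1) * X ^ 4
        + C (X ^ 8 + X ^ 4 + X ^ 3 + X ^ 2 + X : Polynomial K) * X ^ 2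
        + C (X ^ 8 + X ^ 7 + X ^ 4 + X ^ 2 : Polynomial K) * X
        + C (X ^ 8 + X ^ 4 + X ^ 3 + X ^ 2 + X : Polynomial K)) := by
  exact Stmt16.final K
end

section
/- Let q be a power of 2 and A = Y^8+Y^4+Y^3+Y^2+Y, B = Y^8+Y^7+Y^4+Y^2 ∈ \bar{F_q}[Y]. Then the polynomial Z^4 + A Z^2 + B Z + A is irreducible over \bar{F_q}(Y). -/
open Polynomial

section aux

variable (K : Type*) [Field K]

noncomputable def polyA : K[X] := X ^ 8 + X ^ 4 + X ^ 3 + X ^ 2 + X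
noncomputable def polyB : K[X] := X ^ 8 + X ^ 7 + X ^ 4 + X ^ 2

noncomputable def polyF : (K[X])[X] :=
  X ^ 4 + C (polyA K) * X ^ 2 + C (polyB K) * X + C (polyA K)

lemma polyF_monic : (polyF K).Monic := by
  unfold polyF; monicity!

lemma polyF_natDegree : (polyF K).natDegree = 4 := by
  unfold polyF; compute_degree!

lemma polyF_coeff_zero : (polyF K).coeff 0 = polyA K := by
  simp [polyF, coeff_X_pow, coeff_C_mul, coeff_X]

lemma polyF_coeff : ∀ n < 4, (polyF K).coeff n ∈ Ideal.span {(X : K[X])} := by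
  intro n hn
  rw [Ideal.mem_span_singleton, X_dvd_iff]
  have hA : (polyA K).coeff 0 = 0 := by simp [polyA, coeff_X_pow, coeff_X]
  have hB : (polyB K).coeff 0 = 0 := by simp [polyB, coeff_X_pow, coeff_X]
  interval_cases n <;>
    simp [polyF, coeff_X_pow, coeff_C_mul, coeff_X, coeff_C, hA, hB]

lemma polyF_eisenstein : (polyF K).IsEisensteinAt (Ideal.span {(X : K[X])}) := by
  constructor
  · rw [(polyF_monic K).leadingCoeff, Ideal.mem_span_singleton, X_dvd_iff]
    simp
  · intro n hn
    rw [polyF_natDegree K] at hn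
    exact polyF_coeff K n hn
  · rw [polyF_coeff_zero, Ideal.span_singleton_pow, Ideal.mem_span_singleton, X_pow_dvd_iff]
    intro h
    have := h 1 (by norm_num)
    simp [polyA, coeff_X_pow, coeff_X] at this

lemma polyF_irreducible : Irreducible (polyF K) := by
  refine (polyF_eisenstein K).irreducible ?_ (polyF_monic K).isPrimitive
    (by rw [polyF_natDegree]; norm_num)
  rw [Ideal.span_singleton_prime (X_ne_zero)]
  exact prime_X

end aux

open Polynomial in
/-- With `A = Y^8+Y^4+Y^3+Y^2+Y` and `B = Y^8+Y^7+Y^4+Y^2` in `\bar{F_q}[Y]`, the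
polynomial `Z^4 + A Z^2 + B Z + A` is irreducible over the rational function field
`\bar{F_q}(Y)` (here: over `K(Y)` for any algebraically closed `K` of characteristic 2). -/
theorem stmt_17 (K : Type*) [Field K] [IsAlgClosed K] [CharP K 2] [DecidableEq K] :
    Irreducible
      ((X : Polynomial (RatFunc K)) ^ 4
        + C ((RatFunc.X : RatFunc K) ^ 8 + RatFunc.X ^ 4 + RatFunc.X ^ 3
              + RatFunc.X ^ 2 + RatFunc.X) * X ^ 2
        + C ((RatFunc.X : RatFunc K) ^ 8 + RatFunc.X ^ 7 + RatFunc.X ^ 4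
              + RatFunc.X ^ 2) * X
        + C ((RatFunc.X : RatFunc K) ^ 8 + RatFunc.X ^ 4 + RatFunc.X ^ 3
              + RatFunc.X ^ 2 + RatFunc.X)) := by
  have h := ((polyF_monic K).irreducible_iff_irreducible_map_fraction_map
    (K := RatFunc K)).mp (polyF_irreducible K)
  have heq : (polyF K).map (algebraMap K[X] (RatFunc K))
      = (X : Polynomial (RatFunc K)) ^ 4
        + C ((RatFunc.X : RatFunc K) ^ 8 + RatFunc.X ^ 4 + RatFunc.X ^ 3
              + RatFunc.X ^ 2 + RatFunc.X) * X ^ 2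
        + C ((RatFunc.X : RatFunc K) ^ 8 + RatFunc.X ^ 7 + RatFunc.X ^ 4
              + RatFunc.X ^ 2) * X
        + C ((RatFunc.X : RatFunc K) ^ 8 + RatFunc.X ^ 4 + RatFunc.X ^ 3
              + RatFunc.X ^ 2 + RatFunc.X) := by
    simp [polyF, polyA, polyB, Polynomial.map_add, Polynomial.map_mul, Polynomial.map_pow,
      map_add, map_pow, RatFunc.algebraMap_X]
  rwa [heq] at h
end
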